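/- The one-state Turing machine M_cc halts on input u^n 0^m h whenever n ≥ 2^m − 1. -/
import Mathlib


inductive Dir : Type
  | L | R
deriving DecidableEq

def Dir.move : Dir → ℤ
  | .L => -1
  | .R => 1

/-- A one-state Turing machine: a blank symbol, a set of halting symbols
(as a Boolean predicate) and a transition function on the tape alphabet. -/
structure OneStateTM (Γ : Type) where
  blank : Γ
  halt : Γ → Bool
  δ : Γ → Γ × Dir

/-- A configuration: a bi-infinite tape and a head position. -/
structure Cfg (Γ : Type) where
  tape : ℤ → Γ
  pos : ℤ

/-- One step of the machine; `none` means the machine has halted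
(the head reads a halting symbol). -/
def OneStateTM.step {Γ : Type} (M : OneStateTM Γ) (c : Cfg Γ) : Option (Cfg Γ) :=
  if M.halt (c.tape c.pos) then none
  else some ⟨Function.update c.tape c.pos (M.δ (c.tape c.pos)).1,
             c.pos + (M.δ (c.tape c.pos)).2.move⟩

/-- Initial tape: the input written in cells 0,…,len−1, blanks elsewhere. -/
def OneStateTM.initTape {Γ : Type} (M : OneStateTM Γ) (l : List Γ) : ℤ → Γ :=
  fun i => if i < 0 then M.blank else l.getD i.toNat M.blank

/-- The machine halts starting from configuration `c`. -/
def OneStateTM.HaltsFrom {Γ : Type} (M : OneStateTM Γ) (c : Cfg Γ) : Prop :=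
  ∃ n : ℕ, (fun o => Option.bind o M.step)^[n] (some c) = none

/-- The machine halts on input `l` (head initially on the leftmost input symbol). -/
def OneStateTM.HaltsOn {Γ : Type} (M : OneStateTM Γ) (l : List Γ) : Prop :=
  M.HaltsFrom ⟨M.initTape l, 0⟩

/-- The tape alphabet of M_cc: blank, u, U, h, 0, 1, Z, C, B. -/
inductive Tcc : Type
  | blank | u | bigU | h | z0 | one | Z | C | B
deriving DecidableEq

/-- The one-state Turing machine M_cc. -/
def Mcc : OneStateTM Tcc where
  blank := .blank
  halt := fun a => match a with | .h => true | _ => false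
  δ := fun a => match a with
    | .u => (.bigU, .R)
    | .z0 => (.one, .L)
    | .bigU => (.C, .R)
    | .one => (.Z, .R)
    | .Z => (.z0, .L)
    | .C => (.B, .L)
    | .B => (.C, .R)
    | .blank => (.blank, .L)
    | .h => (.h, .R)   -- irrelevant: h is halting

/-- The input u^n 0^m h. -/
def ccInput (n m : ℕ) : List Tcc :=
  List.replicate n .u ++ List.replicate m .z0 ++ [.h]

abbrev Fcc : Option (Cfg Tcc) → Option (Cfg Tcc) := fun o => Option.bind o Mcc.step

lemma step_halt {t : ℤ → Tcc} {q : ℤ} (h : t q = .h) : Mcc.step ⟨t, q⟩ = none := by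
  simp [OneStateTM.step, Mcc, h]

lemma step_u {t : ℤ → Tcc} {q : ℤ} (h : t q = .u) :
    Mcc.step ⟨t, q⟩ = some ⟨Function.update t q .bigU, q + 1⟩ := by
  simp [OneStateTM.step, Mcc, h, Dir.move]

lemma step_z0 {t : ℤ → Tcc} {q : ℤ} (h : t q = .z0) :
    Mcc.step ⟨t, q⟩ = some ⟨Function.update t q .one, q + (-1)⟩ := by
  simp [OneStateTM.step, Mcc, h, Dir.move]

lemma step_bigU {t : ℤ → Tcc} {q : ℤ} (h : t q = .bigU) :
    Mcc.step ⟨t, q⟩ = some ⟨Function.update t q .C, q + 1⟩ := by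
  simp [OneStateTM.step, Mcc, h, Dir.move]

lemma step_one {t : ℤ → Tcc} {q : ℤ} (h : t q = .one) :
    Mcc.step ⟨t, q⟩ = some ⟨Function.update t q .Z, q + 1⟩ := by
  simp [OneStateTM.step, Mcc, h, Dir.move]

lemma step_Z {t : ℤ → Tcc} {q : ℤ} (h : t q = .Z) :
    Mcc.step ⟨t, q⟩ = some ⟨Function.update t q .z0, q + (-1)⟩ := by
  simp [OneStateTM.step, Mcc, h, Dir.move]

lemma step_C {t : ℤ → Tcc} {q : ℤ} (h : t q = .C) :
    Mcc.step ⟨t, q⟩ = some ⟨Function.update t q .B, q + (-1)⟩ := by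
  simp [OneStateTM.step, Mcc, h, Dir.move]

lemma step_B {t : ℤ → Tcc} {q : ℤ} (h : t q = .B) :
    Mcc.step ⟨t, q⟩ = some ⟨Function.update t q .C, q + 1⟩ := by
  simp [OneStateTM.step, Mcc, h, Dir.move]

lemma runs_trans {s1 s2 : ℕ} {o1 o2 o3 : Option (Cfg Tcc)}
    (h1 : Fcc^[s1] o1 = o2) (h2 : Fcc^[s2] o2 = o3) : Fcc^[s2 + s1] o1 = o3 := by
  rw [Function.iterate_add_apply, h1, h2]

lemma run_one {c : Cfg Tcc} : Fcc^[1] (some c) = Mcc.step c := rfl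

lemma haltsFrom_of_run {s : ℕ} {c c' : Cfg Tcc}
    (h : Fcc^[s] (some c) = some c') (h' : Mcc.HaltsFrom c') : Mcc.HaltsFrom c := by
  obtain ⟨n, hn⟩ := h'
  exact ⟨n + s, by rw [Function.iterate_add_apply]; rw [show (fun o => Option.bind o Mcc.step)^[s] (some c) = some c' from h]; exact hn⟩

lemma cfg_eq {t t' : ℤ → Tcc} {q q' : ℤ} (h1 : t = t') (h2 : q = q') :
    (⟨t, q⟩ : Cfg Tcc) = ⟨t', q'⟩ := by rw [h1, h2]

/-- Walk left over `b` cells of C (positions p-b .. p-1), turning them to B. -/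
lemma sweepC : ∀ (b : ℕ) (t : ℤ → Tcc) (p : ℤ),
    (∀ i : ℤ, p - b ≤ i → i < p → t i = .C) →
    Fcc^[b] (some ⟨t, p - 1⟩) =
      some ⟨fun i => if p - b ≤ i ∧ i < p then .B else t i, p - 1 - b⟩ := by
  intro b
  induction b with
  | zero =>
    intro t p _
    simp only [Function.iterate_zero, id_eq, Nat.cast_zero]
    refine congrArg some (cfg_eq ?_ (by ring))
    funext i; split_ifs with h; · omega
    · rfl
  | succ b ih =>
    intro t p ht
    have h1 : t (p - 1) = .C := ht _ (by push_cast; omega) (by omega)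
    have hstep : Fcc^[1] (some ⟨t, p - 1⟩) = some ⟨Function.update t (p-1) .B, (p-1) - 1⟩ := by
      rw [run_one, step_C h1]; exact congrArg some (cfg_eq rfl (by ring))
    have h2 := ih (Function.update t (p-1) .B) (p-1) (by
      intro i hi1 hi2
      rw [Function.update_of_ne (by omega)]
      exact ht i (by push_cast at hi1 ⊢; omega) (by omega))
    have := runs_trans hstep h2
    rw [show b + 1 = b + 1 from rfl] at this
    rw [this]
    refine congrArg some (cfg_eq ?_ (by push_cast; ring))
    funext i
    by_cases hc : i = p - 1
    · subst hc
      rw [if_neg (by push_cast; omega), if_pos (by push_cast; omega), Function.update_self]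
    · by_cases hc2 : p - 1 - b ≤ i ∧ i < p - 1
      · rw [if_pos hc2, if_pos (by push_cast at hc2 ⊢; omega)]
      · rw [if_neg hc2, if_neg (by push_cast at hc2 ⊢; omega), Function.update_of_ne hc]

/-- Walk right over `b` cells of B (positions p-b .. p-1), turning them to C. -/
lemma sweepB : ∀ (b : ℕ) (t : ℤ → Tcc) (p : ℤ),
    (∀ i : ℤ, p - b ≤ i → i < p → t i = .B) →
    Fcc^[b] (some ⟨t, p - b⟩) =
      some ⟨fun i => if p - b ≤ i ∧ i < p then .C else t i, p⟩ := by
  intro b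
  induction b with
  | zero =>
    intro t p _
    simp only [Function.iterate_zero, id_eq, Nat.cast_zero]
    refine congrArg some (cfg_eq ?_ (by ring))
    funext i; split_ifs with h; · omega
    · rfl
  | succ b ih =>
    intro t p ht
    have h1 : t (p - (b+1)) = .B := ht _ (by push_cast; omega) (by push_cast; omega)
    have hstep : Fcc^[1] (some ⟨t, p - (b+1:ℕ)⟩) = some ⟨Function.update t (p-(b+1:ℕ)) .C, p - b⟩ := by
      rw [run_one, step_B (by push_cast; exact h1)]
      exact congrArg some (cfg_eq rfl (by push_cast; ring))
    have h2 := ih (Function.update t (p-(b+1:ℕ)) .C) p (by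
      intro i hi1 hi2
      rw [Function.update_of_ne (by push_cast; omega)]
      exact ht i (by push_cast at hi1 ⊢; omega) hi2)
    have := runs_trans hstep h2
    rw [this]
    refine congrArg some (cfg_eq ?_ rfl)
    funext i
    by_cases hc : i = p - (b+1:ℕ)
    · subst hc
      rw [if_neg (by push_cast; omega), if_pos (by push_cast; omega), Function.update_self]
    · by_cases hc2 : p - b ≤ i ∧ i < p
      · rw [if_pos hc2, if_pos (by push_cast at hc2 ⊢; omega)]
      · rw [if_neg hc2, if_neg (by push_cast at hc2 ⊢; omega), Function.update_of_ne hc]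

/-- Walk right over `n` cells of u (positions p .. p+n-1), turning them to U. -/
lemma sweepU : ∀ (n : ℕ) (t : ℤ → Tcc) (p : ℤ),
    (∀ i : ℤ, p ≤ i → i < p + n → t i = .u) →
    Fcc^[n] (some ⟨t, p⟩) =
      some ⟨fun i => if p ≤ i ∧ i < p + n then .bigU else t i, p + n⟩ := by
  intro n
  induction n with
  | zero =>
    intro t p _
    simp only [Function.iterate_zero, id_eq, Nat.cast_zero]
    refine congrArg some (cfg_eq ?_ (by ring))
    funext i; split_ifs with h; · omega
    · rfl
  | succ n ih =>
    intro t p ht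
    have h1 : t p = .u := ht _ le_rfl (by push_cast; omega)
    have hstep : Fcc^[1] (some ⟨t, p⟩) = some ⟨Function.update t p .bigU, p + 1⟩ := by
      rw [run_one, step_u h1]
    have h2 := ih (Function.update t p .bigU) (p+1) (by
      intro i hi1 hi2
      rw [Function.update_of_ne (by omega)]
      exact ht i (by omega) (by push_cast at hi2 ⊢; omega))
    have := runs_trans hstep h2
    rw [this]
    refine congrArg some (cfg_eq ?_ (by push_cast; ring))
    funext i
    by_cases hc : i = p
    · subst hc
      rw [if_neg (by push_cast; omega), if_pos (by push_cast; omega), Function.update_self]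
    · by_cases hc2 : p + 1 ≤ i ∧ i < p + 1 + n
      · rw [if_pos hc2, if_pos (by push_cast at hc2 ⊢; omega)]
      · rw [if_neg hc2, if_neg (by push_cast at hc2 ⊢; omega), Function.update_of_ne hc]
/-- `Tank p k t` : the region strictly left of `p` can absorb (at least) `k`
left-excursions of the head: each time the head is placed at `p-1`, it comes
back to `p` after finitely many steps without modifying cells `≥ p`. -/
def Tank (p : ℤ) : ℕ → (ℤ → Tcc) → Prop
  | 0, _ => True
  | (k+1), t => ∀ g : ℤ → Tcc, (∀ i, i < p → g i = t i) →
      ∃ (s : ℕ) (t' : ℤ → Tcc), Fcc^[s] (some ⟨g, p - 1⟩) = some ⟨t', p⟩ ∧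
        (∀ i, p ≤ i → t' i = g i) ∧ Tank p k t'

lemma tank_transport {p : ℤ} {k : ℕ} {t g : ℤ → Tcc}
    (h : Tank p k t) (hg : ∀ i, i < p → g i = t i) : Tank p k g := by
  cases k with
  | zero => trivial
  | succ k =>
    intro g' hg'
    exact h g' (fun i hi => (hg' i hi).trans (hg i hi))
/-- A block `U^a C^b` immediately left of `p` is a tank of capacity `a`. -/
lemma UC_tank : ∀ (a b : ℕ) (t : ℤ → Tcc) (p : ℤ),
    (∀ i : ℤ, p - (a+b : ℕ) ≤ i → i < p - b → t i = .bigU) →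
    (∀ i : ℤ, p - b ≤ i → i < p → t i = .C) →
    Tank p a t := by
  intro a
  induction a with
  | zero => intro b t p _ _; trivial
  | succ a ih =>
    intro b t p hU hC g hg
    have hgC : ∀ i : ℤ, p - b ≤ i → i < p → g i = .C := fun i h1 h2 =>
      (hg i h2).trans (hC i h1 h2)
    have h1 := sweepC b g p hgC
    set gA : ℤ → Tcc := fun i => if p - b ≤ i ∧ i < p then .B else g i with hgA
    have hAU : gA (p - b - 1) = .bigU := by
      rw [hgA]; simp only
      rw [if_neg (by omega)]
      rw [hg _ (by omega)]
      exact hU _ (by push_cast; omega) (by omega)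
    have h2 : Fcc^[1] (some ⟨gA, p - 1 - b⟩) =
        some ⟨Function.update gA (p - b - 1) .C, p - b⟩ := by
      rw [run_one, show p - 1 - (b:ℤ) = p - b - 1 by ring, step_bigU hAU]
      exact congrArg some (cfg_eq rfl (by ring))
    set gB : ℤ → Tcc := Function.update gA (p - b - 1) .C with hgB
    have h3 := sweepB b gB p (by
      intro i hi1 hi2
      rw [hgB, Function.update_of_ne (by omega), hgA]
      simp only
      rw [if_pos ⟨hi1, hi2⟩])
    set gC : ℤ → Tcc := fun i => if p - b ≤ i ∧ i < p then .C else gB i with hgC2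
    refine ⟨b + 1 + b, gC, ?_, ?_, ?_⟩
    · exact runs_trans h1 (runs_trans h2 h3)
    · intro i hi
      rw [hgC2]; simp only
      rw [if_neg (by omega), hgB, Function.update_of_ne (by omega), hgA]
      simp only
      rw [if_neg (by omega)]
    · refine ih (b+1) gC p ?_ ?_
      · intro i hi1 hi2
        push_cast at hi1 hi2
        rw [hgC2]; simp only
        rw [if_neg (by omega), hgB, Function.update_of_ne (by omega), hgA]
        simp only
        rw [if_neg (by omega), hg _ (by omega)]
        exact hU _ (by push_cast; omega) (by omega)
      · intro i hi1 hi2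
        push_cast at hi1
        rw [hgC2]; simp only
        by_cases hc : p - b ≤ i
        · rw [if_pos ⟨hc, hi2⟩]
        · rw [if_neg (by omega), hgB,
            show i = p - b - 1 by omega, Function.update_self]
/-- Extending a tank by one counter digit (currently `Z`) halves its capacity. -/
lemma tank_ext : ∀ (r k : ℕ) (t : ℤ → Tcc) (p : ℤ),
    Tank p k t → t p = .Z → 2 * r ≤ k → Tank (p+1) r t := by
  intro r
  induction r with
  | zero => intro k t p _ _ _; trivial
  | succ r ih =>
    intro k t p htank hZ hk
    intro g hg
    rcases k with _ | k₁
    · omega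
    rcases k₁ with _ | k₂
    · omega
    have hgZ : g p = .Z := (hg p (by omega)).trans hZ
    set g1 : ℤ → Tcc := Function.update g p .z0 with hg1
    have step1 : Fcc^[1] (some ⟨g, p + 1 - 1⟩) = some ⟨g1, p - 1⟩ := by
      rw [run_one, show p + 1 - 1 = p by ring, step_Z hgZ]
      exact congrArg some (cfg_eq rfl (by ring))
    have htank1 : Tank p (k₂+1+1) g1 :=
      tank_transport htank (fun i hi => by
        rw [hg1, Function.update_of_ne (by omega)]; exact hg i (by omega))
    obtain ⟨s1, t2, run1, ag2, tk2⟩ := htank1 g1 (fun _ _ => rfl)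
    have ht2p : t2 p = .z0 := by
      rw [ag2 p le_rfl, hg1, Function.update_self]
    set t3 : ℤ → Tcc := Function.update t2 p .one with ht3
    have step2 : Fcc^[1] (some ⟨t2, p⟩) = some ⟨t3, p - 1⟩ := by
      rw [run_one, step_z0 ht2p]
      exact congrArg some (cfg_eq rfl (by ring))
    have htank2 : Tank p (k₂+1) t3 :=
      tank_transport tk2 (fun i hi => by rw [ht3, Function.update_of_ne (by omega)])
    obtain ⟨s2, t4, run2, ag4, tk4⟩ := htank2 t3 (fun _ _ => rfl)
    have ht4p : t4 p = .one := by
      rw [ag4 p le_rfl, ht3, Function.update_self]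
    set t5 : ℤ → Tcc := Function.update t4 p .Z with ht5
    have step3 : Fcc^[1] (some ⟨t4, p⟩) = some ⟨t5, p + 1⟩ := by
      rw [run_one, step_one ht4p]
    refine ⟨1 + s2 + 1 + s1 + 1, t5, ?_, ?_, ?_⟩
    · exact runs_trans step1 (runs_trans run1 (runs_trans step2 (runs_trans run2 step3)))
    · intro i hi
      rw [ht5, Function.update_of_ne (by omega), ag4 i (by omega), ht3,
        Function.update_of_ne (by omega), ag2 i (by omega), hg1,
        Function.update_of_ne (by omega)]
    · refine ih k₂ t5 p ?_ ?_ (by omega)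
      · exact tank_transport tk4 (fun i hi => by rw [ht5, Function.update_of_ne (by omega)])
      · rw [ht5, Function.update_self]
/-- Main lemma: with enough tank capacity behind the head, a block of `m`
zeros followed by `h` leads to halting. -/
lemma tank_halts : ∀ (m : ℕ) (p : ℤ) (k : ℕ) (t : ℤ → Tcc),
    Tank p k t → 2 ^ m - 1 ≤ k →
    (∀ i : ℤ, p ≤ i → i < p + m → t i = .z0) →
    t (p + m) = .h → Mcc.HaltsFrom ⟨t, p⟩ := by
  intro m
  induction m with
  | zero =>
    intro p k t _ _ _ hh
    refine ⟨1, ?_⟩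
    have : t p = .h := by rw [show p = p + ((0:ℕ):ℤ) by push_cast; ring]; exact hh
    show Fcc^[1] (some ⟨t, p⟩) = none
    rw [run_one, step_halt this]
  | succ m ih =>
    intro p k t htank hk hdig hh
    have h2m : 1 ≤ 2 ^ m := Nat.one_le_two_pow
    have hps : (2:ℕ) ^ (m+1) = 2 ^ m * 2 := pow_succ 2 m
    rcases k with _ | k₁
    · omega
    have htp : t p = .z0 := hdig p le_rfl (by push_cast; omega)
    set t1 : ℤ → Tcc := Function.update t p .one with ht1
    have step1 : Fcc^[1] (some ⟨t, p⟩) = some ⟨t1, p - 1⟩ := by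
      rw [run_one, step_z0 htp]
      exact congrArg some (cfg_eq rfl (by ring))
    have htank1 : Tank p (k₁+1) t1 :=
      tank_transport htank (fun i hi => by rw [ht1, Function.update_of_ne (by omega)])
    obtain ⟨s1, t2, run1, ag2, tk2⟩ := htank1 t1 (fun _ _ => rfl)
    have ht2p : t2 p = .one := by rw [ag2 p le_rfl, ht1, Function.update_self]
    set t3 : ℤ → Tcc := Function.update t2 p .Z with ht3
    have step2 : Fcc^[1] (some ⟨t2, p⟩) = some ⟨t3, p + 1⟩ := by
      rw [run_one, step_one ht2p]
    have htank3 : Tank p k₁ t3 :=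
      tank_transport tk2 (fun i hi => by rw [ht3, Function.update_of_ne (by omega)])
    have hext : Tank (p+1) (2^m - 1) t3 :=
      tank_ext (2^m - 1) k₁ t3 p htank3 (by rw [ht3, Function.update_self]) (by omega)
    have hsame : ∀ i : ℤ, p + 1 ≤ i → t3 i = t i := by
      intro i hi
      rw [ht3, Function.update_of_ne (by omega), ag2 i (by omega), ht1,
        Function.update_of_ne (by omega)]
    have hhalts : Mcc.HaltsFrom ⟨t3, p + 1⟩ := by
      refine ih (p+1) (2^m - 1) t3 hext le_rfl ?_ ?_
      · intro i hi1 hi2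
        rw [hsame i hi1]
        exact hdig i (by omega) (by push_cast at hi2 ⊢; omega)
      · rw [hsame _ (by omega), show p + 1 + (m:ℤ) = p + ((m+1:ℕ):ℤ) by push_cast; ring]
        exact hh
    exact haltsFrom_of_run (runs_trans step1 (runs_trans run1 step2)) hhalts
lemma ccInput_getD (n m j : ℕ) :
    (ccInput n m).getD j .blank =
      if j < n then .u else if j < n + m then .z0 else if j = n + m then .h else .blank := by
  rw [ccInput]
  rcases lt_or_ge j (n + m) with h | h
  · rw [List.getD_append _ _ _ _ (by simp; omega)]
    rcases lt_or_ge j n with h2 | h2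
    · rw [List.getD_append _ _ _ _ (by simpa using h2), if_pos h2]
      simp [List.getD_eq_getElem?_getD, List.getElem?_replicate, h2]
    · rw [List.getD_append_right _ _ _ _ (by simpa using h2), List.length_replicate,
        if_neg (by omega), if_pos h]
      rw [List.getD_eq_getElem?_getD, List.getElem?_replicate, if_pos (by omega)]
      rfl
  · rw [List.getD_append_right _ _ _ _ (by simp; omega), if_neg (by omega), if_neg (by omega)]
    simp only [List.length_append, List.length_replicate]
    rcases eq_or_ne j (n + m) with h3 | h3
    · rw [if_pos h3, show j - (n + m) = 0 by omega]
      rfl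
    · rw [if_neg h3, show j - (n + m) = (j - (n + m) - 1) + 1 by omega]
      rfl
/-- M_cc halts on input u^n 0^m h whenever n ≥ 2^m − 1. -/
theorem Mcc_halts_of_ge : ∀ n m : ℕ, 2 ^ m - 1 ≤ n → Mcc.HaltsOn (ccInput n m) := by
  intro n m hnm
  have hev : ∀ i : ℤ, 0 ≤ i →
      Mcc.initTape (ccInput n m) i =
        (if i < (n:ℤ) then Tcc.u else if i < (n:ℤ) + m then Tcc.z0
          else if i = (n:ℤ) + m then Tcc.h else Tcc.blank) := by
    intro i hi
    simp only [OneStateTM.initTape]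
    rw [if_neg (by omega), show Mcc.blank = Tcc.blank from rfl, ccInput_getD]
    split_ifs <;> first | rfl | omega
  have hrun := sweepU n (Mcc.initTape (ccInput n m)) 0 (by
    intro i h1 h2
    rw [hev i h1, if_pos (by omega)])
  set T1 : ℤ → Tcc := fun i =>
    if 0 ≤ i ∧ i < 0 + (n:ℤ) then .bigU else Mcc.initTape (ccInput n m) i with hT1
  have htank : Tank (n:ℤ) n T1 := by
    refine UC_tank n 0 T1 n ?_ ?_
    · intro i h1 h2
      push_cast at h1 h2
      rw [hT1]; simp only
      rw [if_pos (by constructor <;> omega)]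
    · intro i h1 h2
      push_cast at h1
      omega
  have hT1out : ∀ i : ℤ, (n:ℤ) ≤ i → T1 i = Mcc.initTape (ccInput n m) i := by
    intro i hi
    rw [hT1]; simp only
    rw [if_neg (by omega)]
  have hhalts : Mcc.HaltsFrom ⟨T1, (n:ℤ)⟩ := by
    refine tank_halts m (n:ℤ) n T1 htank hnm ?_ ?_
    · intro i h1 h2
      rw [hT1out i h1, hev i (by omega), if_neg (by omega), if_pos (by push_cast at h2 ⊢; omega)]
    · rw [hT1out _ (by omega), hev _ (by omega), if_neg (by omega), if_neg (by omega),
        if_pos rfl]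
  refine haltsFrom_of_run (s := n) ?_ hhalts
  rw [hrun]
  exact congrArg some (cfg_eq rfl (by ring))
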